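/- Let D ≡ 0 or 1 (mod 4) be a non-square integer, and let q₁ < q₂ < ⋯ be all primes with Kronecker symbol (D/q) = -1. If n₀ is the turning index of D and n₀ is odd, then for all i ≥ n₀ + 2 one has |D| + q_{i+1} ≤ q₁q₂⋯q_i. -/

import Mathlib

open NumberTheorySymbols

lemma mult_neg_factor (f : ℕ → ℤ) (hf : ∀ m n, m ≠ 0 → n ≠ 0 → f (m * n) = f m * f n) :
    ∀ N, N ≠ 0 → f N = -1 → ∃ p, p.Prime ∧ p ∣ N ∧ f p = -1 := by
  intro N
  induction N using Nat.strong_induction_on with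
  | _ N ih =>
    intro hN0 hfN
    rcases eq_or_ne N 1 with rfl | hN1
    · have h1 : f 1 = f 1 * f 1 := by simpa using hf 1 1 one_ne_zero one_ne_zero
      rw [hfN] at h1; norm_num at h1
    · have hp : N.minFac.Prime := Nat.minFac_prime hN1
      obtain ⟨m, hm⟩ := Nat.minFac_dvd N
      have hm0 : m ≠ 0 := by rintro rfl; rw [Nat.mul_zero] at hm; exact hN0 hm
      have heq := hf N.minFac m hp.ne_zero hm0
      rw [← hm, hfN] at heq
      have hdp : f N.minFac ∣ (-1 : ℤ) := ⟨f m, heq⟩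
      rcases Int.isUnit_iff.mp (isUnit_of_dvd_unit hdp (isUnit_one.neg)) with h1 | h1
      · have hfm : f m = -1 := by rw [h1, one_mul] at heq; omega
        have hmlt : m < N := by
          rw [hm]
          exact lt_of_lt_of_le (Nat.lt_mul_iff_one_lt_left (Nat.pos_of_ne_zero hm0) |>.mpr hp.one_lt) le_rfl
        obtain ⟨r, hr1, hr2, hr3⟩ := ih m hmlt hm0 hfm
        exact ⟨r, hr1, hr2.trans (Dvd.intro_left _ hm.symm), hr3⟩
      · exact ⟨N.minFac, hp, Nat.minFac_dvd N, h1⟩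

/-- Kronecker symbol `(D/q)` at a prime `q`, for discriminants `D ≡ 0,1 (mod 4)`. -/
def kron (D : ℤ) (q : ℕ) : ℤ :=
  if q = 2 then (if D % 8 = 1 then 1 else if D % 8 = 5 then -1 else 0)
  else jacobiSym D q

lemma chi_exists (D : ℤ) (hD : D % 4 = 0 ∨ D % 4 = 1) (hD0 : D ≠ 0) :
    ∃ (χ : ℕ → ℤ) (G : ℕ → Prop),
      (∀ m n, G m → G n → G (m * n)) ∧ G 1 ∧
      (∀ k, G (k + D.natAbs) ↔ G k) ∧
      (∀ p : ℕ, p.Prime → kron D p = -1 → G p) ∧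
      (∀ p : ℕ, p.Prime → kron D p = χ p) ∧
      χ 1 = 1 ∧
      (∀ m n, m ≠ 0 → n ≠ 0 → χ (m * n) = χ m * χ n) ∧
      (∀ a, 0 < a → G a → χ (a + D.natAbs) = χ a) ∧
      (∀ p : ℕ, p.Prime → χ p = -1 → ¬ p ∣ D.natAbs) := by
  set d : ℕ := D.natAbs with hd
  have hd0 : d ≠ 0 := Int.natAbs_ne_zero.mpr hD0
  haveI : NeZero d := ⟨hd0⟩
  have hsign : (D = (d : ℤ)) ∨ (D = -(d : ℤ)) := Int.natAbs_eq D
  rcases hD with hD4 | hD4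
  · -- D ≡ 0 mod 4 : χ n = J(D | n), G = Odd
    have h4 : (4 : ℤ) ∣ D := Int.dvd_of_emod_eq_zero hD4
    have h4d : 4 ∣ d := by
      rcases h4 with ⟨c, hc⟩
      exact ⟨c.natAbs, by rw [hd, hc, Int.natAbs_mul]; rfl⟩
    have hkron2 : kron D 2 = 0 := by
      have h8 : D % 8 = 0 ∨ D % 8 = 4 := by omega
      simp only [kron, if_pos rfl]
      rcases h8 with h8 | h8 <;> rw [h8] <;> norm_num
    refine ⟨fun n => jacobiSym D n, Odd, fun m n => Odd.mul, odd_one, ?_, ?_, ?_, ?_, ?_, ?_, ?_⟩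
    · intro k
      have h2 : d % 2 = 0 := by omega
      rw [Nat.odd_iff, Nat.odd_iff]
      omega
    · intro p hp hk
      rcases eq_or_ne p 2 with rfl | hp2
      · rw [hkron2] at hk; norm_num at hk
      · exact hp.odd_of_ne_two hp2
    · intro p hp
      rcases eq_or_ne p 2 with rfl | hp2
      · rw [hkron2]
        show (0:ℤ) = jacobiSym D 2
        haveI : Fact (Nat.Prime 2) := ⟨Nat.prime_two⟩
        rw [← jacobiSym.legendreSym.to_jacobiSym]
        have : ((D : ZMod 2) = 0) := by
          rw [ZMod.intCast_zmod_eq_zero_iff_dvd]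
          omega
        exact (legendreSym.eq_zero_iff 2 D |>.mpr this).symm
      · simp only [kron, if_neg hp2]
    · exact jacobiSym.one_right D
    · intro m n hm hn
      exact jacobiSym.mul_right' D hm hn
    · intro a ha hGa
      show jacobiSym D (a + d) = jacobiSym D a
      have hGad : Odd (a + d) := by
        have h2 : d % 2 = 0 := by omega
        rw [Nat.odd_iff] at hGa ⊢
        omega
      have hE : D % 4 = 0 := hD4
      have hcalc : ∀ b : ℕ, Odd b → jacobiSym D b = jacobiSym (D / 4) (b % d) := by
        intro b hb
        rw [← jacobiSym.div_four_left hE (Nat.odd_iff.mp hb)]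
        rw [jacobiSym.mod_right _ hb]
        congr 2
        have : (D / 4).natAbs = d / 4 := by
          rcases h4 with ⟨c, hc⟩
          rw [hc, Int.mul_ediv_cancel_left _ (by norm_num), hd, hc, Int.natAbs_mul]
          norm_num
        rw [this]
        omega
      rw [hcalc a hGa, hcalc (a + d) hGad, Nat.add_mod_right]
    · intro p hp hχ hpd
      simp only at hχ
      haveI : Fact p.Prime := ⟨hp⟩
      haveI : NeZero p := ⟨hp.ne_zero⟩
      have : jacobiSym D p = 0 := by
        rw [jacobiSym.eq_zero_iff_not_coprime]
        have : Int.gcd D p = Nat.gcd d p := by rw [hd]; rfl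
        rw [this, Nat.gcd_eq_right hpd]
        exact hp.ne_one
      rw [this] at hχ; norm_num at hχ
  · -- D ≡ 1 mod 4 : χ n = J(n | d), G trivial
    have hDodd : Odd d := Int.natAbs_odd.mpr (Int.odd_iff.mpr (by omega))
    refine ⟨fun n => jacobiSym (n : ℤ) d, fun _ => True, fun _ _ _ _ => trivial, trivial,
      fun _ => Iff.rfl, fun _ _ _ => trivial, ?_, ?_, ?_, ?_, ?_⟩
    · intro p hp
      rcases eq_or_ne p 2 with rfl | hp2
      · show kron D 2 = jacobiSym ((2:ℕ) : ℤ) d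
        have h8 : D % 8 = 1 ∨ D % 8 = 5 := by omega
        have h2 : d % 2 = 1 := Nat.odd_iff.mp hDodd
        rw [show ((2:ℕ):ℤ) = 2 by norm_num, jacobiSym.at_two hDodd, ZMod.χ₈_nat_eq_if_mod_eight]
        rcases hsign with hs | hs <;> rcases h8 with h8 | h8
        · have h1 : d % 8 = 1 := by omega
          simp [kron, h8, h1, h2]
        · have h1 : d % 8 = 5 := by omega
          simp [kron, h8, h1, h2]
        · have h1 : d % 8 = 7 := by omega
          simp [kron, h8, h1, h2]
        · have h1 : d % 8 = 3 := by omega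
          simp [kron, h8, h1, h2]
      · have hpodd : Odd p := hp.odd_of_ne_two hp2
        have hkp : kron D p = jacobiSym D p := by simp [kron, hp2]
        rw [hkp]
        show jacobiSym D p = jacobiSym ((p:ℕ) : ℤ) d
        rcases hsign with hs | hs
        · have hd4 : d % 4 = 1 := by omega
          rw [hs]
          exact jacobiSym.quadratic_reciprocity_one_mod_four hd4 hpodd
        · have hd4 : d % 4 = 3 := by omega
          rw [hs, jacobiSym.neg _ hpodd]
          have hp4 : p % 4 = 1 ∨ p % 4 = 3 := by have := Nat.odd_iff.mp hpodd; omega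
          rcases hp4 with h | h
          · rw [ZMod.χ₄_nat_one_mod_four h, one_mul]
            exact jacobiSym.quadratic_reciprocity_one_mod_four' hDodd h
          · rw [ZMod.χ₄_nat_three_mod_four h,
              jacobiSym.quadratic_reciprocity_three_mod_four hd4 h]
            ring
    · show jacobiSym ((1:ℕ):ℤ) d = 1
      norm_num
    · intro m n _ _
      show jacobiSym ((m*n : ℕ) : ℤ) d = _
      push_cast
      exact jacobiSym.mul_left _ _ _
    · intro a _ _
      show jacobiSym ((a + d : ℕ) : ℤ) d = jacobiSym ((a:ℕ) : ℤ) d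
      apply jacobiSym.mod_left'
      push_cast
      simp
    · intro p hp hχ hpd
      simp only at hχ
      have : jacobiSym ((p:ℕ):ℤ) d = 0 := by
        rw [jacobiSym.eq_zero_iff_not_coprime]
        rw [Int.gcd_natCast_natCast, Nat.gcd_eq_left hpd]
        exact hp.ne_one
      rw [this] at hχ; norm_num at hχ

theorem stmt13 (D : ℤ) (hD : D % 4 = 0 ∨ D % 4 = 1) (hns : ¬ IsSquare D)
    (d : ℕ) (hd : d = D.natAbs) (n₀ : ℕ) (hn₀ : 1 ≤ n₀)
    (hlt : (∏ j ∈ Finset.range n₀, Nat.nth (fun q => q.Prime ∧ kron D q = -1) j) < d)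
    (hgt : d < ∏ j ∈ Finset.range (n₀ + 1), Nat.nth (fun q => q.Prime ∧ kron D q = -1) j)
    (hodd : Odd n₀) :
    ∀ i : ℕ, n₀ + 2 ≤ i →
      d + Nat.nth (fun q => q.Prime ∧ kron D q = -1) i ≤
        ∏ j ∈ Finset.range i, Nat.nth (fun q => q.Prime ∧ kron D q = -1) j := by
  classical
  have hD0 : D ≠ 0 := by rintro rfl; exact hns ⟨0, by norm_num⟩
  have hd0 : d ≠ 0 := by rw [hd]; exact Int.natAbs_ne_zero.mpr hD0
  obtain ⟨χ, G, g1, g3, g4, g2, hP1, hχ1, hP2, hP3, hP4⟩ := chi_exists D hD hD0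
  rw [← hd] at g4 hP3 hP4
  set pr : ℕ → Prop := fun q => q.Prime ∧ kron D q = -1 with hprdef
  have hkronχ : ∀ p : ℕ, p.Prime → (kron D p = -1 ↔ χ p = -1) := fun p hp => by
    rw [hP1 p hp]
  -- there is at least one such prime
  have hex : ∃ q0, pr q0 := by
    by_contra h
    push_neg at h
    have hemp : setOf pr = ∅ := Set.eq_empty_iff_forall_notMem.mpr h
    have hfin : (setOf pr).Finite := by rw [hemp]; exact Set.finite_empty
    have hzero : Nat.nth pr n₀ = 0 := by
      apply Nat.nth_of_card_le hfin
      have : hfin.toFinset = ∅ := Set.Finite.toFinset_eq_empty.mpr hemp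
      have hc : hfin.toFinset.card = 0 := by rw [this]; simp
      exact le_of_eq_of_le hc (Nat.zero_le _)
    have h0 : (∏ j ∈ Finset.range (n₀ + 1), Nat.nth pr j) = 0 :=
      Finset.prod_eq_zero (Finset.self_mem_range_succ n₀) hzero
    rw [h0] at hgt
    omega
  -- shifting by multiples of d
  have hGshift : ∀ (t a : ℕ), G a → G (a + t * d) := by
    intro t
    induction t with
    | zero => simp
    | succ t ih =>
      intro a ha
      have : a + (t + 1) * d = a + t * d + d := by ring
      rw [this]
      exact (g4 _).mpr (ih a ha)
  have hχshift : ∀ (t a : ℕ), 0 < a → G a → χ (a + t * d) = χ a := by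
    intro t
    induction t with
    | zero => simp
    | succ t ih =>
      intro a ha hGa
      have h1 : a + (t + 1) * d = a + t * d + d := by ring
      rw [h1, hP3 _ (by omega) (hGshift t a hGa), ih a ha hGa]
  -- the set is infinite
  have hinf : (setOf pr).Infinite := by
    by_contra hfin
    rw [Set.not_infinite] at hfin
    obtain ⟨q0, hq0⟩ := hex
    set F := hfin.toFinset with hF
    set M := ∏ r ∈ F, r with hM
    have hFpr : ∀ r ∈ F, pr r := fun r hr => hfin.mem_toFinset.mp hr
    have hFd : ∀ r ∈ F, Nat.Coprime d r := by
      intro r hr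
      have hrpr := hFpr r hr
      exact ((Nat.Prime.coprime_iff_not_dvd hrpr.1).mpr
        (hP4 r hrpr.1 ((hkronχ r hrpr.1).mp hrpr.2))).symm
    have hM0 : M ≠ 0 := by
      rw [hM]
      exact Finset.prod_ne_zero_iff.mpr fun r hr => (hFpr r hr).1.ne_zero
    haveI : NeZero M := ⟨hM0⟩
    have hdM : Nat.Coprime d M := Nat.Coprime.prod_right hFd
    obtain ⟨t, hNmod⟩ : ∃ t : ℕ, (q0 + t * d) ≡ 1 [MOD M] := by
      have hu : IsUnit (d : ZMod M) := (ZMod.isUnit_iff_coprime d M).mpr hdM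
      refine ⟨((1 - (q0 : ZMod M)) * (d : ZMod M)⁻¹).val, ?_⟩
      rw [← ZMod.natCast_eq_natCast_iff]
      push_cast
      rw [ZMod.natCast_rightInverse _]
      rw [mul_assoc, ZMod.inv_mul_of_unit _ hu]
      ring
    set N := q0 + t * d with hN
    have hN0 : N ≠ 0 := by have := hq0.1.pos; omega
    have hχN : χ N = -1 := by
      rw [hN, hχshift t q0 hq0.1.pos (g2 q0 hq0.1 hq0.2)]
      exact (hkronχ q0 hq0.1).mp hq0.2
    obtain ⟨r, hrp, hrdvd, hrχ⟩ := mult_neg_factor χ hP2 N hN0 hχN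
    have hrF : r ∈ F := hfin.mem_toFinset.mpr ⟨hrp, (hkronχ r hrp).mpr hrχ⟩
    have hrM : r ∣ M := Finset.dvd_prod_of_mem _ hrF
    have h1 : N ≡ 1 [MOD r] := hNmod.of_dvd hrM
    have h2 : N % r = 0 := by
      obtain ⟨c, hc⟩ := hrdvd; rw [hc]; exact Nat.mul_mod_right r c
    have h3 : (1 : ℕ) % r = 1 := Nat.mod_eq_of_lt hrp.one_lt
    unfold Nat.ModEq at h1
    omega
  -- basic facts about nth
  have hmem : ∀ i, pr (Nat.nth pr i) := Nat.nth_mem_of_infinite hinf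
  have hqprime : ∀ i, (Nat.nth pr i).Prime := fun i => (hmem i).1
  have hqχ : ∀ i, χ (Nat.nth pr i) = -1 := fun i => (hkronχ _ (hqprime i)).mp (hmem i).2
  have hqpos : ∀ i, 0 < Nat.nth pr i := fun i => (hqprime i).pos
  have hmono : ∀ i j, i ≤ j → Nat.nth pr i ≤ Nat.nth pr j :=
    fun i j h => (Nat.nth_le_nth hinf).mpr h
  set Q : ℕ → ℕ := fun i => ∏ j ∈ Finset.range i, Nat.nth pr j with hQ
  have hQpos : ∀ i, 0 < Q i := fun i => Finset.prod_pos fun j _ => hqpos j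
  have hQsucc : ∀ i, Q (i + 1) = Q i * Nat.nth pr i := fun i => Finset.prod_range_succ _ i
  have hGQ : ∀ i, G (Q i) := by
    intro i
    induction i with
    | zero => simpa [hQ] using g3
    | succ i ih => rw [hQsucc]; exact g1 _ _ ih (g2 _ (hqprime i) (hmem i).2)
  have hχQ : ∀ i, χ (Q i) = (-1) ^ i := by
    intro i
    induction i with
    | zero => simpa [hQ] using hχ1
    | succ i ih =>
      rw [hQsucc, hP2 _ _ (hQpos i).ne' (hqpos i).ne', ih, hqχ i, pow_succ]
  have hQmono : ∀ i j, i ≤ j → Q i ≤ Q j := by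
    intro i j h
    exact Finset.prod_le_prod_of_subset_of_one_le' (Finset.range_subset_range.mpr h)
      fun k _ _ => hqpos k
  have hdQ : ∀ i, n₀ + 1 ≤ i → d < Q i := fun i hi => lt_of_lt_of_le hgt (hQmono _ _ hi)
  -- the odd case
  have hodd_case : ∀ i, n₀ + 1 ≤ i → Odd i → d + Nat.nth pr i ≤ Q i := by
    intro i hi hoi
    obtain ⟨B, hB1, hB2⟩ : ∃ B, Q i = B + d ∧ 0 < B := by
      have := hdQ i hi; exact ⟨Q i - d, by omega, by omega⟩
    have hGB : G B := (g4 B).mp (by rw [← hB1]; exact hGQ i)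
    have hχB : χ B = -1 := by
      have h := hP3 B hB2 hGB
      rw [← hB1, hχQ i, hoi.neg_one_pow] at h
      exact h.symm
    obtain ⟨r, hrp, hrdvd, hrχ⟩ := mult_neg_factor χ hP2 B hB2.ne' hχB
    have hrpr : pr r := ⟨hrp, (hkronχ r hrp).mpr hrχ⟩
    have hjr : Nat.nth pr (Nat.count pr r) = r := Nat.nth_count hrpr
    set j := Nat.count pr r with hj
    have hij : i ≤ j := by
      by_contra hcon
      push_neg at hcon
      have hdvdQ : Nat.nth pr j ∣ Q i :=
        Finset.dvd_prod_of_mem _ (Finset.mem_range.mpr hcon)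
      have hdvdB : Nat.nth pr j ∣ B := by rw [hjr]; exact hrdvd
      have : Nat.nth pr j ∣ d := (Nat.dvd_add_right hdvdB).mp (by rw [← hB1]; exact hdvdQ)
      exact hP4 _ (hqprime j) (hqχ j) this
    have : Nat.nth pr i ≤ r := by rw [← hjr]; exact hmono i j hij
    have hrB : r ≤ B := Nat.le_of_dvd hB2 hrdvd
    omega
  -- conclusion
  intro i hi
  show d + Nat.nth pr i ≤ Q i
  rcases Nat.even_or_odd i with hev | hoi
  · -- even case
    obtain ⟨k, hk⟩ : ∃ k, i = k + 1 ∧ n₀ + 1 ≤ k ∧ Odd k := by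
      obtain ⟨a, ha⟩ := hodd
      have h2 : i % 2 = 0 := Nat.even_iff.mp hev
      refine ⟨i - 1, by omega, by omega, Nat.odd_iff.mpr (by omega)⟩
    obtain ⟨hk1, hk2, hk3⟩ := hk
    have hkodd := hodd_case k hk2 hk3
    set A := Q k with hA
    have hQi : Q i = A * Nat.nth pr k := by rw [hk1]; exact hQsucc k
    have hnk3 : 3 ≤ Nat.nth pr k := by
      have h01 : Nat.nth pr 0 < Nat.nth pr 1 := (Nat.nth_lt_nth hinf).mpr one_pos
      have h0 : 2 ≤ Nat.nth pr 0 := (hqprime 0).two_le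
      have h1k : Nat.nth pr 1 ≤ Nat.nth pr k := hmono 1 k (by omega)
      omega
    obtain ⟨B, hB1, hB2⟩ : ∃ B, A = B + d ∧ 0 < B := by
      have := hdQ k hk2; exact ⟨A - d, by omega, by omega⟩
    have hdA : d < A := hdQ k hk2
    -- χ B = -1
    have hGB : G B := (g4 B).mp (by rw [← hB1]; exact hGQ k)
    have hχB : χ B = -1 := by
      have h := hP3 B hB2 hGB
      rw [← hB1, hχQ k, hk3.neg_one_pow] at h
      exact h.symm
    obtain ⟨r, hrp, hrdvd, hrχ⟩ := mult_neg_factor χ hP2 B hB2.ne' hχB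
    have hrpr : pr r := ⟨hrp, (hkronχ r hrp).mpr hrχ⟩
    have hjr : Nat.nth pr (Nat.count pr r) = r := Nat.nth_count hrpr
    set j := Nat.count pr r with hj
    have hrB : r ≤ B := Nat.le_of_dvd hB2 hrdvd
    rcases lt_trichotomy j k with hjk | hjk | hjk
    · -- impossible : r ∣ d
      exfalso
      have hdvdQ : Nat.nth pr j ∣ A := Finset.dvd_prod_of_mem _ (Finset.mem_range.mpr hjk)
      have hdvdB : Nat.nth pr j ∣ B := by rw [hjr]; exact hrdvd
      have : Nat.nth pr j ∣ d := (Nat.dvd_add_right hdvdB).mp (by rw [← hB1]; exact hdvdQ)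
      exact hP4 _ (hqprime j) (hqχ j) this
    · -- r = nth k divides B ; now use A + d
      have hrk : Nat.nth pr k ∣ B := by rw [← hjk, hjr]; exact hrdvd
      have hχA1 : χ (A + d) = -1 := by
        rw [hP3 A (hQpos k) (hGQ k), hχQ k, hk3.neg_one_pow]
      obtain ⟨r', hrp', hrdvd', hrχ'⟩ := mult_neg_factor χ hP2 (A + d) (by omega) hχA1
      have hrpr' : pr r' := ⟨hrp', (hkronχ r' hrp').mpr hrχ'⟩
      have hjr' : Nat.nth pr (Nat.count pr r') = r' := Nat.nth_count hrpr'
      set j' := Nat.count pr r' with hj'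
      rcases lt_trichotomy j' k with hjk' | hjk' | hjk'
      · exfalso
        have hdvdQ : Nat.nth pr j' ∣ A := Finset.dvd_prod_of_mem _ (Finset.mem_range.mpr hjk')
        have hdvdAd : Nat.nth pr j' ∣ A + d := by rw [hjr']; exact hrdvd'
        have : Nat.nth pr j' ∣ d := (Nat.dvd_add_right hdvdQ).mp hdvdAd
        exact hP4 _ (hqprime j') (hqχ j') this
      · -- nth k ∣ B and nth k ∣ A + d = B + 2*d → nth k ∣ 2*d
        exfalso
        have hrk' : Nat.nth pr k ∣ A + d := by rw [← hjk', hjr']; exact hrdvd'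
        have h2d : Nat.nth pr k ∣ 2 * d := by
          have : A + d = B + 2 * d := by omega
          rw [this] at hrk'
          exact (Nat.dvd_add_right hrk).mp hrk'
        rcases (Nat.Prime.dvd_mul (hqprime k)).mp h2d with h | h
        · have := Nat.le_of_dvd (by norm_num) h; omega
        · exact hP4 _ (hqprime k) (hqχ k) h
      · -- nth i ≤ r' ≤ A + d
        have hik : i ≤ j' := by omega
        have h1 : Nat.nth pr i ≤ r' := by rw [← hjr']; exact hmono i j' hik
        have h2 : r' ≤ A + d := Nat.le_of_dvd (by omega) hrdvd'
        have h3 : A * 3 ≤ A * Nat.nth pr k := Nat.mul_le_mul_left A hnk3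
        rw [hQi]
        omega
    · -- nth i ≤ r ≤ B
      have hik : i ≤ j := by omega
      have h1 : Nat.nth pr i ≤ r := by rw [← hjr]; exact hmono i j hik
      have h2 : A * 1 ≤ A * Nat.nth pr k := Nat.mul_le_mul_left A (hqpos k)
      rw [hQi]
      omega
  · exact hodd_case i (by omega) hoi
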